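/- arXiv:1703.05557 — 3 statements merged into one kernel-verified Lean document; each statement's English description precedes it below -/
import Mathlib

section
/- For every exponent q with 2 < q ≤ 4 there exists a finite constant D_q > 0 such that for all real u ≥ 0 and v ∈ ℝ one has |u+v|^{q/2} ≤ u^{q/2} + (q/2)·v·u^{q/2 - 1} + D_q·|v|^{q/2}. -/
open Real

lemma rpow_subadd {p a b : ℝ} (ha : 0 ≤ a) (hb : 0 ≤ b) (hp0 : 0 ≤ p) (hp1 : p ≤ 1) :
    (a + b) ^ p ≤ a ^ p + b ^ p := by
  have h := NNReal.rpow_add_le_add_rpow a.toNNReal b.toNNReal hp0 hp1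
  have := (NNReal.coe_le_coe).2 h
  simpa [NNReal.coe_rpow, Real.coe_toNNReal _ ha, Real.coe_toNNReal _ hb,
    Real.coe_toNNReal _ (add_nonneg ha hb), ← Real.toNNReal_add ha hb] using this

lemma aux1 {p : ℝ} (hp1 : 1 < p) (hp2 : p ≤ 2) {x : ℝ} (hx : 0 ≤ x) :
    (1 + x) ^ p ≤ 1 + p * x + x ^ p := by
  set f : ℝ → ℝ := fun x => 1 + p * x + x ^ p - (1 + x) ^ p with hf
  have hcont : Continuous f := by
    have h1 : Continuous fun x : ℝ => x ^ p := by
      rw [continuous_iff_continuousAt]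
      exact fun x => Real.continuousAt_rpow_const x p (Or.inr (by linarith))
    have h2 : Continuous fun x : ℝ => (1 + x) ^ p := by
      rw [continuous_iff_continuousAt]
      exact fun x => (Real.continuousAt_rpow_const (1 + x) p (Or.inr (by linarith))).comp
        (by fun_prop)
    fun_prop
  have hderiv : ∀ y : ℝ, 0 < y →
      HasDerivAt f (p + p * y ^ (p - 1) - p * (1 + y) ^ (p - 1)) y := by
    intro y hy
    have d1 : HasDerivAt (fun x : ℝ => x ^ p) (p * y ^ (p - 1)) y :=
      Real.hasDerivAt_rpow_const (Or.inl hy.ne')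
    have d2 : HasDerivAt (fun x : ℝ => (1 + x) ^ p) (p * (1 + y) ^ (p - 1)) y := by
      have := (Real.hasDerivAt_rpow_const (p := p) (x := 1 + y)
        (Or.inl (by positivity))).comp y ((hasDerivAt_const y 1).add (hasDerivAt_id y))
      simpa [Function.comp_def] using this
    have := (((hasDerivAt_const y 1).add ((hasDerivAt_id y).const_mul p)).add d1).sub d2
    simpa [hf, mul_comm, Pi.add_def, Pi.sub_def] using this
  have hmono : MonotoneOn f (Set.Ici (0 : ℝ)) := by
    apply monotoneOn_of_deriv_nonneg (convex_Ici 0) hcont.continuousOn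
    · intro y hy
      rw [interior_Ici] at hy
      exact ((hderiv y hy).differentiableAt).differentiableWithinAt
    · intro y hy
      rw [interior_Ici] at hy
      rw [(hderiv y hy).deriv]
      have hsub : (1 + y) ^ (p - 1) ≤ 1 + y ^ (p - 1) := by
        have := rpow_subadd (p := p - 1) (a := 1) (b := y) zero_le_one hy.le
          (by linarith) (by linarith)
        simpa using this
      nlinarith [(Set.mem_Ioi.1 hy).le, Real.rpow_nonneg (Set.mem_Ioi.1 hy).le (p - 1)]
  have h0 : f 0 = 0 := by
    simp [hf, Real.zero_rpow (by positivity : p ≠ 0)]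
  have := hmono (Set.self_mem_Ici) (Set.mem_Ici.2 hx) hx
  rw [h0] at this
  simpa [hf] using this

lemma aux2 {p : ℝ} (hp1 : 1 < p) (hp2 : p ≤ 2) {w : ℝ} (h0 : 0 ≤ w) (h1 : w ≤ 1) :
    (1 - w) ^ p ≤ 1 - p * w + w ^ p := by
  set f : ℝ → ℝ := fun w => 1 - p * w + w ^ p - (1 - w) ^ p with hf
  have hcont : Continuous f := by
    have h1 : Continuous fun x : ℝ => x ^ p := by
      rw [continuous_iff_continuousAt]
      exact fun x => Real.continuousAt_rpow_const x p (Or.inr (by linarith))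
    have h2 : Continuous fun x : ℝ => (1 - x) ^ p := by
      rw [continuous_iff_continuousAt]
      exact fun x => (Real.continuousAt_rpow_const (1 - x) p (Or.inr (by linarith))).comp
        (by fun_prop)
    fun_prop
  have hderiv : ∀ y : ℝ, y ∈ Set.Ioo (0:ℝ) 1 →
      HasDerivAt f (-p + p * y ^ (p - 1) + p * (1 - y) ^ (p - 1)) y := by
    intro y hy
    have d1 : HasDerivAt (fun x : ℝ => x ^ p) (p * y ^ (p - 1)) y :=
      Real.hasDerivAt_rpow_const (Or.inl hy.1.ne')
    have d2 : HasDerivAt (fun x : ℝ => (1 - x) ^ p) (p * (1 - y) ^ (p - 1) * (-1)) y := by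
      have := (Real.hasDerivAt_rpow_const (p := p) (x := 1 - y)
        (Or.inl (by nlinarith [hy.2]))).comp y ((hasDerivAt_const y 1).sub (hasDerivAt_id y))
      simpa [Function.comp_def] using this
    have := (((hasDerivAt_const y 1).sub ((hasDerivAt_id y).const_mul p)).add d1).sub d2
    have h := this
    convert h using 1
    · rfl
    · rfl
    · rfl
    ring
  have hmono : MonotoneOn f (Set.Icc (0 : ℝ) 1) := by
    apply monotoneOn_of_deriv_nonneg (convex_Icc 0 1) hcont.continuousOn
    · intro y hy
      rw [interior_Icc] at hy
      exact ((hderiv y hy).differentiableAt).differentiableWithinAt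
    · intro y hy
      rw [interior_Icc] at hy
      rw [(hderiv y hy).deriv]
      have e1 : y ≤ y ^ (p - 1) := by
        calc y = y ^ (1 : ℝ) := (Real.rpow_one y).symm
        _ ≤ y ^ (p - 1) := Real.rpow_le_rpow_of_exponent_ge hy.1 hy.2.le (by linarith)
      have e2 : 1 - y ≤ (1 - y) ^ (p - 1) := by
        calc 1 - y = (1 - y) ^ (1 : ℝ) := (Real.rpow_one _).symm
        _ ≤ (1 - y) ^ (p - 1) := Real.rpow_le_rpow_of_exponent_ge
          (by linarith [hy.2]) (by linarith [hy.1]) (by linarith)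
      nlinarith
  have h00 : f 0 = 0 := by
    simp [hf, Real.zero_rpow (by positivity : p ≠ 0)]
  have := hmono (Set.mem_Icc.2 ⟨le_refl 0, zero_le_one⟩) (Set.mem_Icc.2 ⟨h0, h1⟩) h0
  rw [h00] at this
  simpa [hf] using this

lemma key {p : ℝ} (hp1 : 1 < p) (hp2 : p ≤ 2) {u v : ℝ} (hu : 0 < u) (huv : 0 ≤ u + v) :
    (u + v) ^ p ≤ u ^ p + p * v * u ^ (p - 1) + |v| ^ p := by
  set x := v / u with hx
  have hvx : v = u * x := by rw [hx]; field_simp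
  have hu1 : u * u ^ (p - 1) = u ^ p := by
    rw [← Real.rpow_one_add' hu.le (by linarith : (0:ℝ) < 1 + (p-1)).ne']
    ring_nf
  have hxm : -1 ≤ x := by
    rw [hx, le_div_iff₀ hu]; linarith
  have hbase : (1 + x) ^ p ≤ 1 + p * x + |x| ^ p := by
    rcases le_or_gt 0 x with h | h
    · have := aux1 hp1 hp2 h
      rwa [abs_of_nonneg h]
    · have := aux2 hp1 hp2 (w := -x) (by linarith) (by linarith)
      rw [abs_of_neg h]
      calc (1 + x) ^ p = (1 - (-x)) ^ p := by ring_nf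
      _ ≤ 1 - p * (-x) + (-x) ^ p := this
      _ = 1 + p * x + (-x) ^ p := by ring
  have hup : (0:ℝ) ≤ u ^ p := Real.rpow_nonneg hu.le p
  have hmul := mul_le_mul_of_nonneg_left hbase hup
  have e1 : u ^ p * (1 + x) ^ p = (u + v) ^ p := by
    rw [← Real.mul_rpow hu.le (by linarith)]
    congr 1
    rw [hvx]; ring
  have e2 : u ^ p * |x| ^ p = |v| ^ p := by
    rw [← Real.mul_rpow hu.le (abs_nonneg x)]
    congr 1
    rw [hvx, abs_mul, abs_of_pos hu]
  have e3 : u ^ p * (p * x) = p * v * u ^ (p - 1) := by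
    rw [hvx, ← hu1]; ring
  calc (u + v) ^ p = u ^ p * (1 + x) ^ p := e1.symm
  _ ≤ u ^ p * (1 + p * x + |x| ^ p) := hmul
  _ = u ^ p + p * v * u ^ (p - 1) + |v| ^ p := by rw [mul_add, mul_add, e2, e3, mul_one]

theorem stmt_0 (q : ℝ) (hq : 2 < q) (hq4 : q ≤ 4) :
    ∃ D : ℝ, 0 < D ∧ ∀ u v : ℝ, 0 ≤ u →
      |u + v| ^ (q / 2) ≤ u ^ (q / 2) + (q / 2) * v * u ^ (q / 2 - 1) + D * |v| ^ (q / 2) := by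
  set p := q / 2 with hp
  have hp1 : 1 < p := by rw [hp]; linarith
  have hp2 : p ≤ 2 := by rw [hp]; linarith
  refine ⟨4, by norm_num, ?_⟩
  intro u v hu
  have hvp : (0:ℝ) ≤ |v| ^ p := Real.rpow_nonneg (abs_nonneg v) p
  rcases eq_or_lt_of_le hu with h0 | hpos
  · -- u = 0
    rw [← h0]
    simp only [zero_add]
    rw [Real.zero_rpow (by positivity : p ≠ 0), Real.zero_rpow (by linarith : (0:ℝ) < p - 1).ne']
    have : |v| ^ p ≤ 4 * |v| ^ p := by linarith
    simpa using this
  · rcases le_or_gt 0 (u + v) with huv | huv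
    · have := key hp1 hp2 hpos huv
      rw [abs_of_nonneg huv]
      have h1 : |v| ^ p ≤ 4 * |v| ^ p := by linarith
      linarith
    · -- u + v < 0 : v < -u, |u+v| = -(u+v) ≤ |v|
      have hv : v < 0 := by linarith
      have habs : |u + v| = -(u + v) := abs_of_neg huv
      have hle : |u + v| ≤ |v| := by
        rw [habs, abs_of_neg hv]; linarith
      have lhs_le : |u + v| ^ p ≤ |v| ^ p :=
        Real.rpow_le_rpow (abs_nonneg _) hle (by linarith)
      have huv' : u ≤ |v| := by rw [abs_of_neg hv]; linarith
      have hpow : u ^ (p - 1) ≤ |v| ^ (p - 1) :=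
        Real.rpow_le_rpow hu huv' (by linarith)
      have hmul : -(p * v) * u ^ (p - 1) ≤ -(p * v) * |v| ^ (p - 1) := by
        apply mul_le_mul_of_nonneg_left hpow
        nlinarith
      have hvv : |v| * |v| ^ (p - 1) = |v| ^ p := by
        rw [← Real.rpow_one_add' (abs_nonneg v) (by linarith : (0:ℝ) < 1 + (p-1)).ne']
        ring_nf
      have habs2 : -(p * v) * |v| ^ (p - 1) = p * |v| ^ p := by
        rw [← hvv, abs_of_neg hv]; ring
      have hup : (0:ℝ) ≤ u ^ p := Real.rpow_nonneg hu p
      have : p * v * u ^ (p - 1) ≥ -(p * |v| ^ p) := by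
        rw [← habs2]; linarith
      have hp4 : p * |v| ^ p ≤ 2 * |v| ^ p := by nlinarith
      linarith
end

section
/- Define the quadrilinear operator Φ(f₁,f₂,f₃,f₄)(ξ) = Re ∫_{(x₁∧x₂)>(x₃∨x₄)} f₁(x₁)f₂(x₂)·conj(f₃(x₃)f₄(x₄))·e^{2πi(−x₁−x₂+x₃+x₄)ξ} dx₁dx₂dx₃dx₄ for integrable f₁,…,f₄. Then for every ξ: |Φ(f₁,f₂,f₃,f₄)(ξ)| ≤ min( ‖f₁‖_{L^1}‖f₂‖_{L^1}·(𝓕_* f₃)(ξ)(𝓕_* f₄)(ξ), ‖f₃‖_{L^1}‖f₄‖_{L^1}·(𝓕_* f₁)(ξ)(𝓕_* f₂)(ξ) ). -/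
open MeasureTheory

/-- The maximally truncated Fourier transform. -/
noncomputable def Fstar (f : ℝ → ℂ) (ξ : ℝ) : ℝ :=
  sSup {r : ℝ | ∃ I : Set ℝ, I.OrdConnected ∧
    r = ‖∫ x in I, f x * Complex.exp (-(2 * Real.pi * Complex.I * x * ξ))‖}

/-- The quadrilinear operator `Φ`. -/
noncomputable def Phi (f₁ f₂ f₃ f₄ : ℝ → ℂ) (ξ : ℝ) : ℝ :=
  (∫ x in {x : ℝ × ℝ × ℝ × ℝ | max x.2.2.1 x.2.2.2 < min x.1 x.2.1},
    f₁ x.1 * f₂ x.2.1 * (starRingEnd ℂ) (f₃ x.2.2.1 * f₄ x.2.2.2) *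
      Complex.exp (2 * Real.pi * Complex.I * (-x.1 - x.2.1 + x.2.2.1 + x.2.2.2) * ξ)).re

open Set


noncomputable def Efun (ξ x : ℝ) : ℂ := Complex.exp (-(2 * Real.pi * Complex.I * x * ξ))

lemma Efun_norm (ξ x : ℝ) : ‖Efun ξ x‖ = 1 := by
  simp [Efun, Complex.norm_exp]

lemma conj_Efun (ξ x : ℝ) :
    (starRingEnd ℂ) (Efun ξ x) = Complex.exp (2 * Real.pi * Complex.I * x * ξ) := by
  rw [Efun, ← Complex.exp_conj]
  congr 1
  simp only [map_neg, map_mul, Complex.conj_I, Complex.conj_ofReal, map_ofNat]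
  ring

lemma integrable_mul_Efun {f : ℝ → ℂ} (hf : Integrable f) (ξ : ℝ) :
    Integrable (fun x => f x * Efun ξ x) := by
  refine Integrable.mono' hf.norm (hf.1.mul ?_) ?_
  · exact (Complex.continuous_exp.comp (by fun_prop)).aestronglyMeasurable
  · filter_upwards with x
    rw [norm_mul, Efun_norm, mul_one]

lemma integrable_conj_mul_Efun {f : ℝ → ℂ} (hf : Integrable f) (ξ : ℝ) :
    Integrable (fun x => (starRingEnd ℂ) (f x * Efun ξ x)) := by
  refine Integrable.mono' hf.norm
    (Complex.continuous_conj.comp_aestronglyMeasurable (hf.1.mul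
      (Complex.continuous_exp.comp (by fun_prop)).aestronglyMeasurable)) ?_
  · filter_upwards with x
    rw [RCLike.norm_conj, norm_mul, Efun_norm, mul_one]

lemma zero_mem_FstarSet (f : ℝ → ℂ) (ξ : ℝ) :
    (0 : ℝ) ∈ {r : ℝ | ∃ I : Set ℝ, I.OrdConnected ∧
      r = ‖∫ x in I, f x * Complex.exp (-(2 * Real.pi * Complex.I * x * ξ))‖} :=
  ⟨∅, Set.ordConnected_empty, by simp⟩

lemma bddAbove_FstarSet {f : ℝ → ℂ} (hf : Integrable f) (ξ : ℝ) :
    BddAbove {r : ℝ | ∃ I : Set ℝ, I.OrdConnected ∧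
      r = ‖∫ x in I, f x * Complex.exp (-(2 * Real.pi * Complex.I * x * ξ))‖} := by
  refine ⟨∫ x : ℝ, ‖f x‖, ?_⟩
  rintro r ⟨I, hI, rfl⟩
  calc ‖∫ x in I, f x * Complex.exp (-(2 * Real.pi * Complex.I * x * ξ))‖
      = ‖∫ x in I, f x * Efun ξ x‖ := by rfl
    _ ≤ ∫ x in I, ‖f x * Efun ξ x‖ := norm_integral_le_integral_norm _
    _ = ∫ x in I, ‖f x‖ := by
        refine integral_congr_ae (Filter.Eventually.of_forall fun x => ?_)
        simp [Efun_norm]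
    _ ≤ ∫ x : ℝ, ‖f x‖ :=
        setIntegral_le_integral hf.norm (Filter.Eventually.of_forall fun x => norm_nonneg _)

lemma norm_setIntegral_le_Fstar {f : ℝ → ℂ} (hf : Integrable f) (ξ : ℝ) {I : Set ℝ}
    (hI : I.OrdConnected) : ‖∫ x in I, f x * Efun ξ x‖ ≤ Fstar f ξ := by
  exact le_csSup (bddAbove_FstarSet hf ξ) ⟨I, hI, rfl⟩

lemma Fstar_nonneg {f : ℝ → ℂ} (hf : Integrable f) (ξ : ℝ) : 0 ≤ Fstar f ξ :=
  le_csSup (bddAbove_FstarSet hf ξ) (zero_mem_FstarSet f ξ)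

def S2 : Set ((ℝ × ℝ) × (ℝ × ℝ)) := {P | max P.2.1 P.2.2 < min P.1.1 P.1.2}

lemma measurableSet_S2 : MeasurableSet S2 := by
  apply measurableSet_lt
  · exact (measurable_fst.comp measurable_snd).max (measurable_snd.comp measurable_snd)
  · exact (measurable_fst.comp measurable_fst).min (measurable_snd.comp measurable_fst)

lemma integrable_G2 {u v w z : ℝ → ℂ} (hu : Integrable u) (hv : Integrable v)
    (hw : Integrable w) (hz : Integrable z) :
    Integrable (fun P : (ℝ × ℝ) × (ℝ × ℝ) => u P.1.1 * v P.1.2 * w P.2.1 * z P.2.2) := by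
  have h12 : Integrable (fun q : ℝ × ℝ => u q.1 * v q.2) := by
    rw [Measure.volume_eq_prod]; exact hu.mul_prod hv
  have h34 : Integrable (fun q : ℝ × ℝ => w q.1 * z q.2) := by
    rw [Measure.volume_eq_prod]; exact hw.mul_prod hz
  have h : Integrable (fun P : (ℝ × ℝ) × (ℝ × ℝ) =>
      (u P.1.1 * v P.1.2) * (w P.2.1 * z P.2.2)) := by
    rw [Measure.volume_eq_prod]; exact h12.mul_prod h34
  exact h.congr (Filter.Eventually.of_forall fun P => by ring)

lemma core_eq₁ (u v w z : ℝ → ℂ) (hu : Integrable u) (hv : Integrable v)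
    (hw : Integrable w) (hz : Integrable z) :
    (∫ P in S2, u P.1.1 * v P.1.2 * w P.2.1 * z P.2.2) =
      ∫ ab : ℝ × ℝ, (u ab.1 * v ab.2) *
        ((∫ c in Set.Iio (min ab.1 ab.2), w c) * (∫ d in Set.Iio (min ab.1 ab.2), z d)) := by
  have hF : Integrable (S2.indicator
      (fun P : (ℝ × ℝ) × (ℝ × ℝ) => u P.1.1 * v P.1.2 * w P.2.1 * z P.2.2)) :=
    (integrable_G2 hu hv hw hz).indicator measurableSet_S2
  rw [← integral_indicator measurableSet_S2]
  rw [show (volume : Measure ((ℝ × ℝ) × (ℝ × ℝ))) = (volume : Measure (ℝ × ℝ)).prod volume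
    from Measure.volume_eq_prod _ _] at hF ⊢
  rw [integral_prod _ hF]
  refine integral_congr_ae (Filter.Eventually.of_forall fun ab => ?_)
  have hmem : ∀ cd : ℝ × ℝ, S2.indicator
      (fun P : (ℝ × ℝ) × (ℝ × ℝ) => u P.1.1 * v P.1.2 * w P.2.1 * z P.2.2) (ab, cd) =
      (u ab.1 * v ab.2) * ((Set.Iio (min ab.1 ab.2) ×ˢ Set.Iio (min ab.1 ab.2)).indicator
        (fun cd : ℝ × ℝ => w cd.1 * z cd.2) cd) := by
    intro cd
    by_cases h : cd.1 < min ab.1 ab.2 ∧ cd.2 < min ab.1 ab.2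
    · have hmS : (ab, cd) ∈ S2 := max_lt h.1 h.2
      rw [Set.indicator_of_mem hmS, Set.indicator_of_mem (Set.mem_prod.mpr h)]
      ring
    · rw [Set.indicator_of_notMem, Set.indicator_of_notMem, mul_zero]
      · exact fun hc => h ⟨hc.1, hc.2⟩
      · exact fun hc => h ⟨lt_of_le_of_lt (le_max_left _ _) hc,
          lt_of_le_of_lt (le_max_right _ _) hc⟩
  simp only [hmem]
  rw [integral_const_mul]
  congr 1
  rw [integral_indicator (measurableSet_Iio.prod measurableSet_Iio),
    show (volume : Measure (ℝ × ℝ)) = (volume : Measure ℝ).prod volume from Measure.volume_eq_prod _ _,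
    setIntegral_prod_mul]

lemma core_eq₂ (u v w z : ℝ → ℂ) (hu : Integrable u) (hv : Integrable v)
    (hw : Integrable w) (hz : Integrable z) :
    (∫ P in S2, u P.1.1 * v P.1.2 * w P.2.1 * z P.2.2) =
      ∫ cd : ℝ × ℝ, (w cd.1 * z cd.2) *
        ((∫ a in Set.Ioi (max cd.1 cd.2), u a) * (∫ b in Set.Ioi (max cd.1 cd.2), v b)) := by
  have hF : Integrable (S2.indicator
      (fun P : (ℝ × ℝ) × (ℝ × ℝ) => u P.1.1 * v P.1.2 * w P.2.1 * z P.2.2)) :=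
    (integrable_G2 hu hv hw hz).indicator measurableSet_S2
  rw [← integral_indicator measurableSet_S2]
  rw [show (volume : Measure ((ℝ × ℝ) × (ℝ × ℝ))) = (volume : Measure (ℝ × ℝ)).prod volume
    from Measure.volume_eq_prod _ _] at hF ⊢
  rw [integral_prod_symm _ hF]
  refine integral_congr_ae (Filter.Eventually.of_forall fun cd => ?_)
  have hmem : ∀ ab : ℝ × ℝ, S2.indicator
      (fun P : (ℝ × ℝ) × (ℝ × ℝ) => u P.1.1 * v P.1.2 * w P.2.1 * z P.2.2) (ab, cd) =
      (w cd.1 * z cd.2) * ((Set.Ioi (max cd.1 cd.2) ×ˢ Set.Ioi (max cd.1 cd.2)).indicator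
        (fun ab : ℝ × ℝ => u ab.1 * v ab.2) ab) := by
    intro ab
    by_cases h : max cd.1 cd.2 < ab.1 ∧ max cd.1 cd.2 < ab.2
    · have hmS : (ab, cd) ∈ S2 := lt_min h.1 h.2
      have hmP : ab ∈ Set.Ioi (max cd.1 cd.2) ×ˢ Set.Ioi (max cd.1 cd.2) := ⟨h.1, h.2⟩
      rw [Set.indicator_of_mem hmS, Set.indicator_of_mem hmP]
      ring
    · rw [Set.indicator_of_notMem, Set.indicator_of_notMem, mul_zero]
      · exact fun hc => h ⟨hc.1, hc.2⟩
      · exact fun hc => h ⟨lt_of_lt_of_le hc (min_le_left _ _),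
          lt_of_lt_of_le hc (min_le_right _ _)⟩
  simp only [hmem]
  rw [integral_const_mul]
  congr 1
  rw [integral_indicator (measurableSet_Ioi.prod measurableSet_Ioi),
    show (volume : Measure (ℝ × ℝ)) = (volume : Measure ℝ).prod volume
      from Measure.volume_eq_prod _ _,
    setIntegral_prod_mul]

lemma core_bound₁ {u v w z : ℝ → ℂ} (hu : Integrable u) (hv : Integrable v)
    (hw : Integrable w) (hz : Integrable z) {Cw Cz : ℝ}
    (hCw : ∀ m : ℝ, ‖∫ x in Set.Iio m, w x‖ ≤ Cw)
    (hCz : ∀ m : ℝ, ‖∫ x in Set.Iio m, z x‖ ≤ Cz) :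
    ‖∫ P in S2, u P.1.1 * v P.1.2 * w P.2.1 * z P.2.2‖ ≤
      (∫ x : ℝ, ‖u x‖) * (∫ x : ℝ, ‖v x‖) * (Cw * Cz) := by
  have h0w : 0 ≤ Cw := le_trans (norm_nonneg _) (hCw 0)
  have h0z : 0 ≤ Cz := le_trans (norm_nonneg _) (hCz 0)
  rw [core_eq₁ u v w z hu hv hw hz]
  have hint : Integrable (fun ab : ℝ × ℝ => (‖u ab.1‖ * ‖v ab.2‖) * (Cw * Cz)) := by
    have : Integrable (fun ab : ℝ × ℝ => ‖u ab.1‖ * ‖v ab.2‖) := by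
      rw [show (volume : Measure (ℝ × ℝ)) = (volume : Measure ℝ).prod volume
        from Measure.volume_eq_prod _ _]
      exact hu.norm.mul_prod hv.norm
    exact this.mul_const _
  calc ‖∫ ab : ℝ × ℝ, (u ab.1 * v ab.2) *
        ((∫ c in Set.Iio (min ab.1 ab.2), w c) * (∫ d in Set.Iio (min ab.1 ab.2), z d))‖
      ≤ ∫ ab : ℝ × ℝ, ‖(u ab.1 * v ab.2) *
        ((∫ c in Set.Iio (min ab.1 ab.2), w c) * (∫ d in Set.Iio (min ab.1 ab.2), z d))‖ :=
        norm_integral_le_integral_norm _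
    _ ≤ ∫ ab : ℝ × ℝ, (‖u ab.1‖ * ‖v ab.2‖) * (Cw * Cz) := by
        refine integral_mono_of_nonneg (Filter.Eventually.of_forall fun ab => norm_nonneg _)
          hint (Filter.Eventually.of_forall fun ab => ?_)
        dsimp only
        rw [norm_mul, norm_mul, norm_mul]
        gcongr
        · exact hCw _
        · exact hCz _
    _ = (∫ x : ℝ, ‖u x‖) * (∫ x : ℝ, ‖v x‖) * (Cw * Cz) := by
        rw [integral_mul_const]
        congr 1
        rw [show (volume : Measure (ℝ × ℝ)) = (volume : Measure ℝ).prod volume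
          from Measure.volume_eq_prod _ _]
        exact integral_prod_mul (fun x => ‖u x‖) (fun x => ‖v x‖)

lemma core_bound₂ {u v w z : ℝ → ℂ} (hu : Integrable u) (hv : Integrable v)
    (hw : Integrable w) (hz : Integrable z) {Cu Cv : ℝ}
    (hCu : ∀ m : ℝ, ‖∫ x in Set.Ioi m, u x‖ ≤ Cu)
    (hCv : ∀ m : ℝ, ‖∫ x in Set.Ioi m, v x‖ ≤ Cv) :
    ‖∫ P in S2, u P.1.1 * v P.1.2 * w P.2.1 * z P.2.2‖ ≤
      (∫ x : ℝ, ‖w x‖) * (∫ x : ℝ, ‖z x‖) * (Cu * Cv) := by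
  have h0u : 0 ≤ Cu := le_trans (norm_nonneg _) (hCu 0)
  have h0v : 0 ≤ Cv := le_trans (norm_nonneg _) (hCv 0)
  rw [core_eq₂ u v w z hu hv hw hz]
  have hint : Integrable (fun cd : ℝ × ℝ => (‖w cd.1‖ * ‖z cd.2‖) * (Cu * Cv)) := by
    have : Integrable (fun cd : ℝ × ℝ => ‖w cd.1‖ * ‖z cd.2‖) := by
      rw [show (volume : Measure (ℝ × ℝ)) = (volume : Measure ℝ).prod volume
        from Measure.volume_eq_prod _ _]
      exact hw.norm.mul_prod hz.norm
    exact this.mul_const _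
  calc ‖∫ cd : ℝ × ℝ, (w cd.1 * z cd.2) *
        ((∫ a in Set.Ioi (max cd.1 cd.2), u a) * (∫ b in Set.Ioi (max cd.1 cd.2), v b))‖
      ≤ ∫ cd : ℝ × ℝ, ‖(w cd.1 * z cd.2) *
        ((∫ a in Set.Ioi (max cd.1 cd.2), u a) * (∫ b in Set.Ioi (max cd.1 cd.2), v b))‖ :=
        norm_integral_le_integral_norm _
    _ ≤ ∫ cd : ℝ × ℝ, (‖w cd.1‖ * ‖z cd.2‖) * (Cu * Cv) := by
        refine integral_mono_of_nonneg (Filter.Eventually.of_forall fun cd => norm_nonneg _)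
          hint (Filter.Eventually.of_forall fun cd => ?_)
        dsimp only
        rw [norm_mul, norm_mul, norm_mul]
        gcongr
        · exact hCu _
        · exact hCv _
    _ = (∫ x : ℝ, ‖w x‖) * (∫ x : ℝ, ‖z x‖) * (Cu * Cv) := by
        rw [integral_mul_const]
        congr 1
        rw [show (volume : Measure (ℝ × ℝ)) = (volume : Measure ℝ).prod volume
          from Measure.volume_eq_prod _ _]
        exact integral_prod_mul (fun x => ‖w x‖) (fun x => ‖z x‖)

theorem stmt_16 (f₁ f₂ f₃ f₄ : ℝ → ℂ)
    (h₁ : Integrable f₁) (h₂ : Integrable f₂) (h₃ : Integrable f₃) (h₄ : Integrable f₄) :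
    ∀ ξ : ℝ, |Phi f₁ f₂ f₃ f₄ ξ| ≤
      min ((∫ x : ℝ, ‖f₁ x‖) * (∫ x : ℝ, ‖f₂ x‖) * (Fstar f₃ ξ * Fstar f₄ ξ))
        ((∫ x : ℝ, ‖f₃ x‖) * (∫ x : ℝ, ‖f₄ x‖) * (Fstar f₁ ξ * Fstar f₂ ξ)) := by
  intro ξ
  have hu := integrable_mul_Efun h₁ ξ
  have hv := integrable_mul_Efun h₂ ξ
  have hw := integrable_conj_mul_Efun h₃ ξ
  have hz := integrable_conj_mul_Efun h₄ ξ
  have hPhi : Phi f₁ f₂ f₃ f₄ ξ = (∫ P in S2,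
      (f₁ P.1.1 * Efun ξ P.1.1) * (f₂ P.1.2 * Efun ξ P.1.2) *
        (starRingEnd ℂ) (f₃ P.2.1 * Efun ξ P.2.1) *
        (starRingEnd ℂ) (f₄ P.2.2 * Efun ξ P.2.2)).re := by
    unfold Phi
    congr 1
    have hmp : MeasurePreserving
        (MeasurableEquiv.prodAssoc : ((ℝ × ℝ) × (ℝ × ℝ)) ≃ᵐ ℝ × ℝ × ℝ × ℝ)
        volume volume := volume_preserving_prodAssoc
    have hkey := hmp.setIntegral_preimage_emb (MeasurableEquiv.measurableEmbedding _)
      (fun x : ℝ × ℝ × ℝ × ℝ => f₁ x.1 * f₂ x.2.1 * (starRingEnd ℂ) (f₃ x.2.2.1 * f₄ x.2.2.2) *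
        Complex.exp (2 * Real.pi * Complex.I * (-x.1 - x.2.1 + x.2.2.1 + x.2.2.2) * ξ))
      {x : ℝ × ℝ × ℝ × ℝ | max x.2.2.1 x.2.2.2 < min x.1 x.2.1}
    rw [← hkey]
    refine setIntegral_congr_fun measurableSet_S2 fun P _ => ?_
    obtain ⟨⟨a, b⟩, ⟨c, d⟩⟩ := P
    simp only [MeasurableEquiv.prodAssoc, Equiv.prodAssoc, Equiv.coe_fn_mk,
      MeasurableEquiv.coe_mk]
    have hexp : Complex.exp (2 * (Real.pi : ℂ) * Complex.I * (-(a : ℂ) - b + c + d) * ξ) =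
        Efun ξ a * Efun ξ b * Complex.exp (2 * Real.pi * Complex.I * c * ξ) *
          Complex.exp (2 * Real.pi * Complex.I * d * ξ) := by
      rw [Efun, Efun, ← Complex.exp_add, ← Complex.exp_add, ← Complex.exp_add]
      congr 1
      push_cast
      ring
    rw [hexp]
    simp only [map_mul, conj_Efun]
    ring
  rw [hPhi]
  have habs : |(∫ P in S2,
      (f₁ P.1.1 * Efun ξ P.1.1) * (f₂ P.1.2 * Efun ξ P.1.2) *
        (starRingEnd ℂ) (f₃ P.2.1 * Efun ξ P.2.1) *
        (starRingEnd ℂ) (f₄ P.2.2 * Efun ξ P.2.2)).re| ≤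
      ‖∫ P in S2,
      (f₁ P.1.1 * Efun ξ P.1.1) * (f₂ P.1.2 * Efun ξ P.1.2) *
        (starRingEnd ℂ) (f₃ P.2.1 * Efun ξ P.2.1) *
        (starRingEnd ℂ) (f₄ P.2.2 * Efun ξ P.2.2)‖ := by
    exact Complex.abs_re_le_norm _
  refine le_min (habs.trans ?_) (habs.trans ?_)
  · have hCw : ∀ m : ℝ, ‖∫ x in Set.Iio m, (starRingEnd ℂ) (f₃ x * Efun ξ x)‖ ≤ Fstar f₃ ξ := by
      intro m
      rw [integral_conj, RCLike.norm_conj]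
      exact norm_setIntegral_le_Fstar h₃ ξ Set.ordConnected_Iio
    have hCz : ∀ m : ℝ, ‖∫ x in Set.Iio m, (starRingEnd ℂ) (f₄ x * Efun ξ x)‖ ≤ Fstar f₄ ξ := by
      intro m
      rw [integral_conj, RCLike.norm_conj]
      exact norm_setIntegral_le_Fstar h₄ ξ Set.ordConnected_Iio
    refine le_trans (core_bound₁ hu hv hw hz hCw hCz) (le_of_eq ?_)
    congr 1
    congr 1
    · exact integral_congr_ae (Filter.Eventually.of_forall fun x => by
        simp [norm_mul, Efun_norm])
    · exact integral_congr_ae (Filter.Eventually.of_forall fun x => by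
        simp [norm_mul, Efun_norm])
  · have hCu : ∀ m : ℝ, ‖∫ x in Set.Ioi m, f₁ x * Efun ξ x‖ ≤ Fstar f₁ ξ := fun m =>
      norm_setIntegral_le_Fstar h₁ ξ Set.ordConnected_Ioi
    have hCv : ∀ m : ℝ, ‖∫ x in Set.Ioi m, f₂ x * Efun ξ x‖ ≤ Fstar f₂ ξ := fun m =>
      norm_setIntegral_le_Fstar h₂ ξ Set.ordConnected_Ioi
    refine le_trans (core_bound₂ hu hv hw hz hCu hCv) (le_of_eq ?_)
    congr 1
    congr 1
    · exact integral_congr_ae (Filter.Eventually.of_forall fun x => by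
        simp [RCLike.norm_conj, norm_mul, Efun_norm])
    · exact integral_congr_ae (Filter.Eventually.of_forall fun x => by
        simp [RCLike.norm_conj, norm_mul, Efun_norm])
end

section
/- Let f ∈ L^1(ℝ) be compactly supported with Dirac scattering data a(ξ), b(ξ), and reflection coefficient r(x,ξ) = b(x,ξ)/a(x,ξ). Then for every ξ with a(ξ) ≠ 0: log(|a(ξ)|²) = 2·Re ∫_ℝ f(x)·e^{−2πi xξ}·conj(r(x,ξ)) dx. -/
open MeasureTheory Filter

lemma aux_hasDerivAt_conj {g : ℝ → ℂ} {g' : ℂ} {x : ℝ} (h : HasDerivAt g g' x) :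
    HasDerivAt (fun t => (starRingEnd ℂ) (g t)) ((starRingEnd ℂ) g') x := by
  have := (Complex.conjCLE.toContinuousLinearMap.hasFDerivAt (x := g x)).comp_hasDerivAt x h
  exact this

lemma aux_hasDerivAt_re {g : ℝ → ℂ} {g' : ℂ} {x : ℝ} (h : HasDerivAt g g' x) :
    HasDerivAt (fun t => (g t).re) g'.re x := by
  have := (Complex.reCLM.hasFDerivAt (x := g x)).comp_hasDerivAt x h
  exact this

theorem stmt_18 (f : ℝ → ℂ) (a b : ℝ → ℝ → ℂ) (A : ℝ → ℂ)
    (hf : Integrable f) (hsupp : HasCompactSupport f)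
    (ha : ∀ ξ x : ℝ, HasDerivAt (fun t => a t ξ)
      ((starRingEnd ℂ) (f x) * Complex.exp (2 * Real.pi * Complex.I * x * ξ) * b x ξ) x)
    (hb : ∀ ξ x : ℝ, HasDerivAt (fun t => b t ξ)
      (f x * Complex.exp (-(2 * Real.pi * Complex.I * x * ξ)) * a x ξ) x)
    (ha0 : ∀ ξ : ℝ, Tendsto (fun t => a t ξ) atBot (nhds 1))
    (hb0 : ∀ ξ : ℝ, Tendsto (fun t => b t ξ) atBot (nhds 0))
    (haA : ∀ ξ : ℝ, Tendsto (fun t => a t ξ) atTop (nhds (A ξ))) :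
    ∀ ξ : ℝ, A ξ ≠ 0 →
      Real.log (‖A ξ‖ ^ 2) =
        2 * (∫ x : ℝ, f x * Complex.exp (-(2 * Real.pi * Complex.I * x * ξ)) *
          (starRingEnd ℂ) (b x ξ / a x ξ)).re := by
  intro ξ hA
  set E : ℝ → ℂ := fun x => Complex.exp (2 * Real.pi * Complex.I * x * ξ) with hE
  set Em : ℝ → ℂ := fun x => Complex.exp (-(2 * Real.pi * Complex.I * x * ξ)) with hEm
  have hcE : ∀ x : ℝ, (starRingEnd ℂ) (E x) = Em x := by
    intro x
    rw [hE, hEm, ← Complex.exp_conj]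
    congr 1
    simp only [map_mul, Complex.conj_I, Complex.conj_ofReal, map_ofNat]
    ring
  have hcEm : ∀ x : ℝ, (starRingEnd ℂ) (Em x) = E x := by
    intro x
    rw [hE, hEm, ← Complex.exp_conj]
    congr 1
    simp only [map_neg, map_mul, Complex.conj_I, Complex.conj_ofReal, map_ofNat]
    ring
  -- support radius
  obtain ⟨R, hRsupp⟩ : ∃ R : ℝ, tsupport f ⊆ Set.Icc (-R) R := by
    obtain ⟨r, hr⟩ := hsupp.isCompact.isBounded.subset_closedBall 0
    exact ⟨r, by simpa [Real.closedBall_eq_Icc] using hr⟩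
  set R' : ℝ := |R| + 1 with hR'
  have hfz : ∀ x : ℝ, R' ≤ |x| → f x = 0 := by
    intro x hx
    apply image_eq_zero_of_notMem_tsupport
    intro hmem
    have := hRsupp hmem
    obtain ⟨hl, hr⟩ := Set.mem_Icc.1 this
    have h1 : |x| ≤ |R| := abs_le.2 ⟨by linarith [neg_abs_le R, le_abs_self R], by linarith [neg_abs_le R, le_abs_self R]⟩
    linarith
  -- the conserved quantity
  have hF : ∀ x : ℝ, a x ξ * (starRingEnd ℂ) (a x ξ) - b x ξ * (starRingEnd ℂ) (b x ξ) = 1 := by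
    have hder : ∀ x : ℝ, HasDerivAt (fun t => a t ξ * (starRingEnd ℂ) (a t ξ) - b t ξ * (starRingEnd ℂ) (b t ξ)) 0 x := by
      intro x
      have h1 := (ha ξ x).mul (aux_hasDerivAt_conj (ha ξ x))
      have h2 := (hb ξ x).mul (aux_hasDerivAt_conj (hb ξ x))
      have h3 := h1.sub h2
      convert h3 using 1
      · rfl
      · rfl
      rw [show Complex.exp (2 * Real.pi * Complex.I * x * ξ) = E x from rfl,
        show Complex.exp (-(2 * Real.pi * Complex.I * x * ξ)) = Em x from rfl]
      simp only [map_mul, Complex.conj_conj, hcE x, hcEm x]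
      ring
    have hconst : ∀ x y : ℝ, (a x ξ * (starRingEnd ℂ) (a x ξ) - b x ξ * (starRingEnd ℂ) (b x ξ)) =
        (a y ξ * (starRingEnd ℂ) (a y ξ) - b y ξ * (starRingEnd ℂ) (b y ξ)) := by
      intro x y
      exact is_const_of_deriv_eq_zero (fun t => (hder t).differentiableAt)
        (fun t => (hder t).deriv) x y
    intro x
    have hlim : Tendsto (fun t => a t ξ * (starRingEnd ℂ) (a t ξ) - b t ξ * (starRingEnd ℂ) (b t ξ)) atBot (nhds 1) := by
      have h1 : Tendsto (fun t => (starRingEnd ℂ) (a t ξ)) atBot (nhds (((starRingEnd ℂ) 1))) :=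
        (Complex.continuous_conj.tendsto _).comp (ha0 ξ)
      have h2 : Tendsto (fun t => (starRingEnd ℂ) (b t ξ)) atBot (nhds (((starRingEnd ℂ) 0))) :=
        (Complex.continuous_conj.tendsto _).comp (hb0 ξ)
      have := ((ha0 ξ).mul h1).sub ((hb0 ξ).mul h2)
      simpa using this
    have hlim' : Tendsto (fun t => a t ξ * (starRingEnd ℂ) (a t ξ) - b t ξ * (starRingEnd ℂ) (b t ξ)) atBot
        (nhds (a x ξ * (starRingEnd ℂ) (a x ξ) - b x ξ * (starRingEnd ℂ) (b x ξ))) :=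
      tendsto_const_nhds.congr (fun t => (hconst t x).symm) |>.mono_left le_rfl
    exact tendsto_nhds_unique hlim' hlim
  -- normSq identity and nonvanishing of a
  have hns : ∀ x : ℝ, Complex.normSq (a x ξ) = 1 + Complex.normSq (b x ξ) := by
    intro x
    have := hF x
    rw [Complex.mul_conj, Complex.mul_conj] at this
    have h2 : ((Complex.normSq (a x ξ) : ℂ)) = ((1 + Complex.normSq (b x ξ) : ℝ) : ℂ) := by
      push_cast
      linear_combination this
    exact_mod_cast h2
  have hane : ∀ x : ℝ, a x ξ ≠ 0 := by
    intro x
    rw [← Complex.normSq_pos, hns x]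
    nlinarith [Complex.normSq_nonneg (b x ξ)]
  have hnspos : ∀ x : ℝ, 0 < Complex.normSq (a x ξ) := fun x => by
    rw [hns x]; nlinarith [Complex.normSq_nonneg (b x ξ)]
  -- G and its derivative
  set G : ℝ → ℝ := fun x => Real.log (Complex.normSq (a x ξ)) with hG
  set g : ℝ → ℝ := fun x => 2 * (f x * Em x * (starRingEnd ℂ) (b x ξ / a x ξ)).re with hg
  have hGd : ∀ x : ℝ, HasDerivAt G (g x) x := by
    intro x
    have h1 := (ha ξ x).mul (aux_hasDerivAt_conj (ha ξ x))
    have hP0 := aux_hasDerivAt_re h1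
    have hfun : (fun t => (a t ξ * (starRingEnd ℂ) (a t ξ)).re) =
        fun t => Complex.normSq (a t ξ) :=
      funext fun t => by simp [Complex.mul_conj]
    simp only [Pi.mul_apply] at hP0
    rw [hfun] at hP0
    have h3 := (Real.hasDerivAt_log (ne_of_gt (hnspos x))).comp x hP0
    have h4 : HasDerivAt G ((Complex.normSq (a x ξ))⁻¹ *
        ((starRingEnd ℂ) (f x) * E x * b x ξ * (starRingEnd ℂ) (a x ξ) +
          a x ξ * (starRingEnd ℂ) ((starRingEnd ℂ) (f x) * E x * b x ξ)).re) x := h3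
    convert h4 using 1
    set z : ℂ := a x ξ * (f x * Em x * (starRingEnd ℂ) (b x ξ)) with hz
    have hD : ((starRingEnd ℂ) (f x) * E x * b x ξ * (starRingEnd ℂ) (a x ξ) +
        a x ξ * (starRingEnd ℂ) ((starRingEnd ℂ) (f x) * E x * b x ξ)) =
        z + (starRingEnd ℂ) z := by
      simp only [hz, map_mul, Complex.conj_conj, hcE x, hcEm x]
      ring
    rw [hD, Complex.add_conj]
    have hre : ((2 * z.re : ℝ) : ℂ).re = 2 * z.re := by simp
    rw [hre]
    have hzre : z / ((Complex.normSq (a x ξ) : ℝ) : ℂ) =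
        f x * Em x * (starRingEnd ℂ) (b x ξ / a x ξ) := by
      rw [hz, map_div₀, ← Complex.mul_conj]
      have hca : (starRingEnd ℂ) (a x ξ) ≠ 0 := by
        simpa using hane x
      have ha' : a x ξ ≠ 0 := hane x
      field_simp
    have hkey : (f x * Em x * (starRingEnd ℂ) (b x ξ / a x ξ)).re =
        z.re / Complex.normSq (a x ξ) := by
      rw [← hzre, Complex.div_ofReal_re]
    simp only [hg]
    rw [hkey]
    field_simp
  -- FTC over [-R', R']
  have hdiffa : Differentiable ℝ (fun t => a t ξ) := fun x => (ha ξ x).differentiableAt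
  have hdiffb : Differentiable ℝ (fun t => b t ξ) := fun x => (hb ξ x).differentiableAt
  have hconta : Continuous (fun x => a x ξ) := hdiffa.continuous
  have hcontb : Continuous (fun x => b x ξ) := hdiffb.continuous
  have hcont_ba : Continuous (fun x => Em x * (starRingEnd ℂ) (b x ξ / a x ξ)) := by
    apply Continuous.mul
    · exact Complex.continuous_exp.comp (by continuity)
    · exact Complex.continuous_conj.comp (hcontb.div hconta hane)
  -- boundedness: |b/a| <= 1
  have hbnd : ∀ x : ℝ, ‖Em x * (starRingEnd ℂ) (b x ξ / a x ξ)‖ ≤ 1 := by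
    intro x
    rw [norm_mul]
    have h1 : ‖Em x‖ = 1 := by
      rw [hEm]
      simp only [Complex.norm_exp]
      have : (-(2 * Real.pi * Complex.I * x * ξ)).re = 0 := by
        simp [Complex.mul_re, Complex.mul_im]
      rw [this, Real.exp_zero]
    rw [h1, one_mul, RCLike.norm_conj, norm_div]
    have hapos : 0 < ‖a x ξ‖ := norm_pos_iff.2 (hane x)
    rw [div_le_one hapos]
    have h3 : Complex.normSq (b x ξ) ≤ Complex.normSq (a x ξ) := by
      have := hns x; linarith
    calc ‖b x ξ‖ = Real.sqrt (Complex.normSq (b x ξ)) := by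
          rw [Complex.norm_def]
      _ ≤ Real.sqrt (Complex.normSq (a x ξ)) := Real.sqrt_le_sqrt h3
      _ = ‖a x ξ‖ := by rw [Complex.norm_def]
  -- integrability of the integrand
  set h : ℝ → ℂ := fun x => f x * Em x * (starRingEnd ℂ) (b x ξ / a x ξ) with hh
  have hInt : Integrable h := by
    have h1 : Integrable (fun x => (Em x * (starRingEnd ℂ) (b x ξ / a x ξ)) * f x) :=
      hf.bdd_mul hcont_ba.aestronglyMeasurable (Eventually.of_forall hbnd)
    exact h1.congr (Eventually.of_forall fun x => by rw [hh]; ring)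
  have hIntre : Integrable (fun x => (h x).re) := hInt.re
  -- support of the integrand
  have hsupp_h : Function.support (fun x => (h x).re) ⊆ Set.Ioc (-R') R' := by
    intro x hx
    by_contra hmem
    apply hx
    simp only [Set.mem_Ioc, not_and_or, not_lt, not_le] at hmem
    have hfx : f x = 0 := by
      apply hfz
      rcases hmem with h1 | h1
      · exact le_abs.2 (Or.inr (by linarith))
      · exact le_abs.2 (Or.inl h1.le)
    simp [hh, hfx]
  -- interval integrability of g
  have hIIg : IntervalIntegrable g volume (-R') R' := by
    have h1 : IntervalIntegrable (fun x => (h x).re) volume (-R') R' :=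
      hIntre.intervalIntegrable
    have h2 := h1.const_mul 2
    exact h2.congr_ae (Eventually.of_forall fun x => by rw [hg])
  -- FTC
  have hR'le : (-R' : ℝ) ≤ R' := by rw [hR']; linarith [abs_nonneg R]
  have hFTC : ∫ x in (-R')..R', g x = G R' - G (-R') :=
    intervalIntegral.integral_eq_sub_of_hasDerivAt (fun t _ => hGd t) hIIg
  -- relate interval integral to full integral
  have hint_eq : ∫ x in (-R')..R', g x = 2 * (∫ x, h x).re := by
    have h1 : ∫ x in (-R')..R', g x = 2 * ∫ x in (-R')..R', (h x).re := by
      rw [← intervalIntegral.integral_const_mul]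
    have h2 : ∫ x in (-R')..R', (h x).re = ∫ x, (h x).re :=
      intervalIntegral.integral_eq_integral_of_support_subset hsupp_h
    have h3 : ∫ x, (h x).re = (∫ x, h x).re := by
      simpa using integral_re hInt
    rw [h1, h2, h3]
  -- boundary values
  have hbot : ∀ x ≤ -R', a (-R') ξ = a x ξ := by
    intro x hx
    have := constant_of_has_deriv_right_zero (f := fun t => a t ξ) (a := x) (b := -R')
      hconta.continuousOn
      (fun y hy => by
        have hfy : f y = 0 := hfz y (le_abs.2 (Or.inr (by have := hy.2; linarith)))
        simpa [hfy] using (ha ξ y).hasDerivWithinAt)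
    exact this (-R') (Set.right_mem_Icc.2 hx)
  have htop : ∀ x, R' ≤ x → a x ξ = a R' ξ := by
    intro x hx
    have := constant_of_has_deriv_right_zero (f := fun t => a t ξ) (a := R') (b := x)
      hconta.continuousOn
      (fun y hy => by
        have hfy : f y = 0 := hfz y (le_abs.2 (Or.inl hy.1))
        simpa [hfy] using (ha ξ y).hasDerivWithinAt)
    exact this x (Set.right_mem_Icc.2 hx)
  have habot : a (-R') ξ = 1 := by
    refine tendsto_nhds_unique ?_ (ha0 ξ)
    refine tendsto_const_nhds.congr' ?_
    filter_upwards [eventually_le_atBot (-R')] with t ht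
    exact hbot t ht
  have hatop : A ξ = a R' ξ := by
    refine tendsto_nhds_unique (haA ξ) ?_
    refine tendsto_const_nhds.congr' ?_
    filter_upwards [eventually_ge_atTop R'] with t ht
    exact (htop t ht).symm
  have hGbot : G (-R') = 0 := by
    rw [hG]
    simp [habot]
  have hGtop : G R' = Real.log (Complex.normSq (A ξ)) := by
    rw [hG, hatop]
  -- conclude
  have habs : ‖A ξ‖ ^ 2 = Complex.normSq (A ξ) := Complex.sq_norm _
  rw [habs, ← hGtop]
  have : G R' = G R' - G (-R') := by rw [hGbot]; ring
  rw [this, ← hFTC, hint_eq]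
end
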